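/- Let λ be an n-core and w the minimal-length coset representative with λ = w∅, and k_{w,α} = ⌊⟨w^{-1}(ρ/n), α⟩⌋. Then Σ_{j=1}^{n−1} k_{w, α_{1,j}} = ℓ(λ). -/

import Mathlib

open Finset

namespace Shi

/-- Number of boxes in column `j` (0-indexed) of the partition `lam` with `ℓ` positive parts:
the conjugate partition. -/
def conjP (lam : ℕ → ℕ) (ℓ j : ℕ) : ℕ := ((Finset.range ℓ).filter (fun i => j < lam i)).card

/-- Hook length of the (0-indexed) box `(i, j)` of the partition `lam` having `ℓ` positive
parts. -/
def hookP (lam : ℕ → ℕ) (ℓ i j : ℕ) : ℤ :=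
  (lam i : ℤ) - j + conjP lam ℓ j - i - 1

/-- `lam : ℕ → ℕ` (0-indexed, weakly decreasing, exactly `ℓ` positive parts) is an `n`-core:
no hook length is divisible by `n`. -/
def IsCore (n : ℕ) (lam : ℕ → ℕ) (ℓ : ℕ) : Prop :=
  Antitone lam ∧ (∀ i, 0 < lam i ↔ i < ℓ) ∧
    ∀ i j, i < ℓ → j < lam i → ¬ ((n : ℤ) ∣ hookP lam ℓ i j)

/-- The `k`-th β-number (first column hook length) of `lam`, 0-indexed. -/
def betaP (lam : ℕ → ℕ) (ℓ k : ℕ) : ℤ := (lam k : ℤ) + ℓ - k - 1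

/-- `x` is a bead of the original abacus of `lam`: a negative integer or a β-number. -/
def IsBead (lam : ℕ → ℕ) (ℓ : ℕ) (x : ℤ) : Prop := x < 0 ∨ ∃ k < ℓ, betaP lam ℓ k = x

/-- The vector `ρ = ((n-1)/2, (n-1)/2 - 1, …, (1-n)/2)`, half the sum of positive roots. -/
noncomputable def rhoV (n : ℕ) : Fin n → ℝ := fun i => ((n : ℝ) - 1) / 2 - ((i : ℕ) : ℝ)

/-- `w⁻¹(v)` for the affine transformation `w = t_a ∘ u` (translation by `a` after the
permutation `u`), i.e. `w⁻¹(v) = u⁻¹ · (v - a)`. -/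
noncomputable def winv (n : ℕ) (u : Equiv.Perm (Fin n)) (a : Fin n → ℤ) (v : Fin n → ℝ) : Fin n → ℝ :=
  fun i => v (u i) - (a (u i) : ℝ)

/-- `u` is the minimal length permutation sorting `-a` into antidominant position, i.e.
`a ∘ u` is weakly increasing and ties are broken stably; this is the finite part of the
minimal length coset representative `w = t_a u`. -/
def SortsMin {n : ℕ} (u : Equiv.Perm (Fin n)) (a : Fin n → ℤ) : Prop :=
  ∀ i j : Fin n, i < j → a (u i) < a (u j) ∨ (a (u i) = a (u j) ∧ u i < u j)

/-- `a` is the vector of level numbers of the balanced abacus of `lam`: for some shift `c`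
of the original abacus, the beads on runner `i` occupy exactly the levels `< a i`, and the
balance number is `0`. -/
def BalancedLevels (n : ℕ) (lam : ℕ → ℕ) (ℓ : ℕ) (a : Fin n → ℤ) : Prop :=
  (∑ i, a i) = 0 ∧ ∃ c : ℤ, ∀ i : Fin n, ∀ q : ℤ,
    IsBead lam ℓ (q * n + ((i : ℕ) : ℤ) - c) ↔ q < a i

lemma ediv_neg_one (x : ℤ) (n : ℕ) (h1 : -n ≤ x) (h2 : x < 0) : x / n = -1 := by
  have hn : (n:ℤ) ≠ 0 := by omega
  have := Int.add_mul_ediv_right (x + n) (-1) hn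
  rw [show x + (n:ℤ) + (-1)*(n:ℤ) = x by ring,
    Int.ediv_eq_zero_of_lt (a := x + n) (b := n) (by omega) (by omega)] at this
  omega

lemma floor_int_div (m : ℤ) (d : ℕ) : ⌊(m : ℝ)/(d : ℝ)⌋ = m / d := by
  rw [show (m:ℝ)/(d:ℝ) = ((((m:ℚ) / (d:ℚ)) : ℚ) : ℝ) by push_cast; ring, Rat.floor_cast,
    Rat.floor_intCast_div_natCast]

lemma decomp_ediv (q r : ℤ) (n : ℕ) (h0 : 0 ≤ r) (h1 : r < n) :
    (q * n + r) / n = q ∧ (q * n + r) % n = r := by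
  have hn : (n:ℤ) ≠ 0 := by omega
  constructor
  · rw [show q * (n:ℤ) + r = r + q * n by ring, Int.add_mul_ediv_right r q hn,
      Int.ediv_eq_zero_of_lt h0 h1, zero_add]
  · rw [show q * (n:ℤ) + r = r + q * n by ring, Int.add_mul_emod_self_right,
      Int.emod_eq_of_lt h0 h1]

lemma sum_shift : ∀ {n : ℕ}, 2 ≤ n → ∀ (g : Fin n → ℤ), (∀ h : 0 < n, g ⟨0, h⟩ = 0) →
    (∑ j : Fin (n-1), g ⟨(j:ℕ)+1, by have := j.isLt; omega⟩) = ∑ i : Fin n, g i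
  | n+1, _, g, h0 => by
    rw [Fin.sum_univ_succ g, show (0 : Fin (n+1)) = ⟨0, Nat.succ_pos n⟩ from rfl,
      h0 (Nat.succ_pos n), zero_add]
    exact Finset.sum_congr rfl (fun j _ => rfl)


/-- the sum of the Shi coordinates `k_{w,α_{1,j}}` of the alcove
`w⁻¹A_0` over `1 ≤ j ≤ n-1` equals `ℓ(λ)`. -/
theorem row_coord_sum (n : ℕ) (hn : 2 ≤ n) (lam : ℕ → ℕ) (ℓ : ℕ)
    (hcore : IsCore n lam ℓ) (a : Fin n → ℤ) (hbal : BalancedLevels n lam ℓ a)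
    (u : Equiv.Perm (Fin n)) (hu : SortsMin u a) :
    (∑ j : Fin (n - 1),
      ⌊winv n u a (fun t => rhoV n t / n) ⟨0, by omega⟩ -
        winv n u a (fun t => rhoV n t / n)
          ⟨(j : ℕ) + 1, by have := j.isLt; omega⟩⌋) = (ℓ : ℤ) := by
  obtain ⟨hmono, hpos, -⟩ := hcore
  obtain ⟨hsum, c, hc⟩ := hbal
  have hn0 : (0:ℤ) < (n:ℤ) := by exact_mod_cast (by omega : 0 < n)
  set z : Fin n := ⟨0, by omega⟩ with hz
  -- β-numbers are ≥ 1 and strictly decreasing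
  have hbeta1 : ∀ k, k < ℓ → 1 ≤ betaP lam ℓ k := by
    intro k hk
    have := (hpos k).mpr hk
    unfold betaP; omega
  have hbmono : ∀ k₁ k₂, k₁ < k₂ → betaP lam ℓ k₂ < betaP lam ℓ k₁ := by
    intro k₁ k₂ h
    have := hmono (le_of_lt h)
    unfold betaP; omega
  -- all sufficiently placed positions are nonnegative
  have hA : ∀ (i : Fin n) (q : ℤ), a i ≤ q → 0 ≤ q * n + ((i:ℕ):ℤ) - c := by
    intro i q hq
    by_contra h
    push_neg at h
    exact absurd ((hc i q).mp (Or.inl h)) (not_lt.mpr hq)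
  -- 0 is not a bead
  have hbead0 : ¬ IsBead lam ℓ 0 := by
    rintro (h | ⟨k, hk, hbk⟩)
    · exact absurd h (by norm_num)
    · have := hbeta1 k hk; omega
  -- decomposition of c
  obtain ⟨Q, R, hQR, hR0, hRn⟩ :
      ∃ Q R : ℤ, Q * n + R = c ∧ 0 ≤ R ∧ R < n :=
    ⟨c / n, c % n, by rw [mul_comm]; exact Int.mul_ediv_add_emod c n,
      Int.emod_nonneg c (by omega), Int.emod_lt_of_pos c hn0⟩
  set i0 : Fin n := ⟨R.toNat, by omega⟩ with hi0def
  have hi0 : ((i0:ℕ):ℤ) = R := by simp [hi0def]; omega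
  have hQa : a i0 ≤ Q := by
    by_contra h
    push_neg at h
    have hb := (hc i0 Q).mpr h
    rw [show Q * (n:ℤ) + ((i0:ℕ):ℤ) - c = 0 by rw [hi0]; linarith] at hb
    exact hbead0 hb
  -- u z minimizes i ↦ a i * n + i
  have hmin : ∀ i : Fin n, a (u z) * n + ((u z : ℕ):ℤ) ≤ a i * n + ((i:ℕ):ℤ) := by
    intro i
    obtain ⟨j, rfl⟩ : ∃ j, u j = i := ⟨u.symm i, u.apply_symm_apply i⟩
    rcases eq_or_ne j z with rfl | hj
    · exact le_rfl
    · have h0j : z < j := by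
        rw [Fin.lt_def]; simp [hz]
        exact Nat.pos_of_ne_zero (fun h => hj (Fin.ext (by simp [hz, h])))
      have huz : ((u z : ℕ):ℤ) < n := by exact_mod_cast (u z).isLt
      have huj : (0:ℤ) ≤ ((u j : ℕ):ℤ) := by positivity
      rcases hu z j h0j with h | ⟨h1, h2⟩
      · have := mul_le_mul_of_nonneg_right (by linarith : a (u z) + 1 ≤ a (u j)) (le_of_lt hn0)
        linarith
      · have h3 : ((u z : ℕ):ℤ) ≤ ((u j : ℕ):ℤ) := by
          have := h2; rw [Fin.lt_def] at this; omega
        rw [h1]; linarith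
  -- c equals the minimum
  have hceq : c = a (u z) * n + ((u z : ℕ):ℤ) := by
    have h1 : c ≤ a (u z) * n + ((u z : ℕ):ℤ) := by
      have := hA (u z) (a (u z)) le_rfl; linarith
    have h2 : a i0 * n + ((i0:ℕ):ℤ) ≤ c := by
      have := mul_le_mul_of_nonneg_right hQa (le_of_lt hn0)
      rw [hi0]; linarith
    have h3 := hmin i0
    linarith
  -- the shifted ceiling function
  set q0i : Fin n → ℤ := fun i => -((((i:ℕ):ℤ) - c) / n) with hq0i
  have hF1 : ∀ (i : Fin n) (q : ℤ), q0i i ≤ q ↔ 0 ≤ q * n + ((i:ℕ):ℤ) - c := by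
    intro i q
    rw [hq0i]
    simp only
    rw [neg_le, Int.le_ediv_iff_mul_le hn0]
    constructor <;> intro h <;> linarith
  have hF2 : ∀ i : Fin n, q0i i ≤ a i := fun i => (hF1 i (a i)).mpr (hA i (a i) le_rfl)
  -- counting: ℓ = Σ (a i - q0i i)
  have h1n : (n:ℤ) ≠ 0 := by omega
  obtain ⟨fib, hfibval⟩ :
      ∃ fib : ℕ → Fin n, ∀ k : ℕ, ((fib k : ℕ) : ℤ) = (betaP lam ℓ k + c) % n := by
    refine ⟨fun k => ⟨((betaP lam ℓ k + c) % n).toNat, ?_⟩, fun k => ?_⟩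
    · have h1 := Int.emod_nonneg (betaP lam ℓ k + c) h1n
      have h2 := Int.emod_lt_of_pos (betaP lam ℓ k + c) hn0
      omega
    · have h1 := Int.emod_nonneg (betaP lam ℓ k + c) h1n
      simp only
      omega
  have hmod : ∀ (k : ℕ) (i : Fin n), fib k = i → (betaP lam ℓ k + c) % n = ((i:ℕ):ℤ) := by
    intro k i hki
    rw [← hfibval k, hki]
  have hlcard : (ℓ:ℤ) = ∑ i : Fin n, (a i - q0i i) := by
    have hcard := Finset.card_eq_sum_card_fiberwise
      (f := fib) (t := (Finset.univ : Finset (Fin n))) (s := Finset.range ℓ)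
      (fun k _ => Finset.mem_univ _)
    rw [Finset.card_range] at hcard
    have hper : ∀ i : Fin n,
        ((Finset.range ℓ).filter (fun k => fib k = i)).card
          = (Finset.Ico (q0i i) (a i)).card := by
      intro i
      apply Finset.card_bij (fun k _ => (betaP lam ℓ k + c) / n)
      · -- maps into Ico
        intro k hk
        rw [Finset.mem_filter, Finset.mem_range] at hk
        obtain ⟨hkl, hki⟩ := hk
        have hmodi := hmod k i hki
        have hrec : (betaP lam ℓ k + c) / n * n + ((i:ℕ):ℤ) - c = betaP lam ℓ k := by
          have := Int.mul_ediv_add_emod (betaP lam ℓ k + c) n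
          rw [hmodi] at this
          linarith
        rw [Finset.mem_Ico]
        constructor
        · rw [hF1, hrec]
          linarith [hbeta1 k hkl]
        · have hb : IsBead lam ℓ ((betaP lam ℓ k + c) / n * n + ((i:ℕ):ℤ) - c) := by
            rw [hrec]; exact Or.inr ⟨k, hkl, rfl⟩
          exact (hc i _).mp hb
      · -- injective
        intro k₁ h₁ k₂ h₂ heq
        rw [Finset.mem_filter, Finset.mem_range] at h₁ h₂
        have e1 := Int.mul_ediv_add_emod (betaP lam ℓ k₁ + c) n
        have e2 := Int.mul_ediv_add_emod (betaP lam ℓ k₂ + c) n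
        rw [hmod k₁ i h₁.2] at e1
        rw [hmod k₂ i h₂.2] at e2
        have hbeq : betaP lam ℓ k₁ = betaP lam ℓ k₂ := by
          rw [heq] at e1; linarith
        by_contra hne
        rcases Nat.lt_or_ge k₁ k₂ with h | h
        · exact absurd hbeq (by have := hbmono k₁ k₂ h; omega)
        · have h' : k₂ < k₁ := by omega
          exact absurd hbeq (by have := hbmono k₂ k₁ h'; omega)
      · -- surjective
        intro q hq
        rw [Finset.mem_Ico] at hq
        obtain ⟨hq1, hq2⟩ := hq
        have hx0 : 0 ≤ q * n + ((i:ℕ):ℤ) - c := (hF1 i q).mp hq1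
        have hb : IsBead lam ℓ (q * n + ((i:ℕ):ℤ) - c) := (hc i q).mpr hq2
        rcases hb with h | ⟨k, hkl, hbk⟩
        · omega
        · have hic : ((i:ℕ):ℤ) < n := by exact_mod_cast i.isLt
          have hiQ : (0:ℤ) ≤ ((i:ℕ):ℤ) := by positivity
          have hdec := decomp_ediv q ((i:ℕ):ℤ) n hiQ hic
          have hXc : betaP lam ℓ k + c = q * n + ((i:ℕ):ℤ) := by omega
          refine ⟨k, ?_, ?_⟩
          · rw [Finset.mem_filter, Finset.mem_range]
            refine ⟨hkl, ?_⟩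
            apply Fin.ext
            have := hfibval k
            rw [hXc, hdec.2] at this
            omega
          · rw [hXc, hdec.1]
    rw [Finset.sum_congr rfl (fun i _ => hper i)] at hcard
    rw [hcard]
    push_cast
    refine Finset.sum_congr rfl (fun i _ => ?_)
    rw [Int.card_Ico, Int.toNat_of_nonneg (by linarith [hF2 i])]
  -- Σ q0i = c
  have hsumq0 : ∑ i : Fin n, q0i i = c := by
    have hterm : ∀ i : Fin n, q0i i = Q + (if ((i:ℕ):ℤ) < R then 1 else 0) := by
      intro i
      have hic : ((i:ℕ):ℤ) < n := by exact_mod_cast i.isLt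
      have hiQ : (0:ℤ) ≤ ((i:ℕ):ℤ) := by positivity
      have hrw : (((i:ℕ):ℤ) - c) / n = (((i:ℕ):ℤ) - R) / n + (-Q) := by
        rw [show ((i:ℕ):ℤ) - c = (((i:ℕ):ℤ) - R) + (-Q) * n by rw [← hQR]; ring]
        exact Int.add_mul_ediv_right _ _ (by omega)
      rw [hq0i]
      simp only
      rw [hrw]
      by_cases h : ((i:ℕ):ℤ) < R
      · rw [if_pos h, ediv_neg_one _ _ (by omega) (by omega)]; ring
      · rw [if_neg h, Int.ediv_eq_zero_of_lt (by omega) (by omega)]; ring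
    rw [Finset.sum_congr rfl (fun i _ => hterm i), Finset.sum_add_distrib,
      Finset.sum_const, Finset.card_univ, Fintype.card_fin, Finset.sum_ite, Finset.sum_const,
      Finset.sum_const]
    have hfil : (Finset.univ.filter (fun i : Fin n => ((i:ℕ):ℤ) < R)) =
        Finset.Iio (⟨R.toNat, by omega⟩ : Fin n) := by
      ext x
      simp only [Finset.mem_filter, Finset.mem_univ, true_and, Finset.mem_Iio, Fin.lt_def]
      omega
    rw [hfil, Fin.card_Iio]
    simp only [nsmul_eq_mul, mul_one, mul_zero, add_zero]
    rw [← hQR]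
    have hRt : ((R.toNat : ℕ) : ℤ) = R := by omega
    push_cast
    linarith [hRt]
  -- conclude ℓ = -c
  have hlc : (ℓ:ℤ) = -c := by
    rw [hlcard, Finset.sum_sub_distrib, hsum, hsumq0]; ring
  -- now the floor sum
  set v : Fin n → ℝ := fun t => rhoV n t / n with hv
  have hterm : ∀ i : Fin n, ⌊winv n u a v z - winv n u a v i⌋ =
      (a (u i) - a (u z)) + (((u i : ℕ):ℤ) - ((u z : ℕ):ℤ)) / n := by
    intro i
    have heq : winv n u a v z - winv n u a v i =
        (((((u i : ℕ):ℤ) - ((u z : ℕ):ℤ)) : ℤ) : ℝ)/(n:ℝ) + (((a (u i) - a (u z)) : ℤ) : ℝ) := by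
      simp only [hv, winv, rhoV]
      push_cast
      ring
    rw [heq, Int.floor_add_intCast, floor_int_div]
    ring
  have hdiv : ∀ i : Fin n, (((u i : ℕ):ℤ) - ((u z : ℕ):ℤ)) / n =
      if u i < u z then -1 else 0 := by
    intro i
    have h1 := (u i).isLt
    have h2 := (u z).isLt
    by_cases h : u i < u z
    · rw [if_pos h]
      rw [Fin.lt_def] at h
      exact ediv_neg_one _ _ (by omega) (by omega)
    · rw [if_neg h]
      rw [Fin.lt_def, not_lt] at h
      exact Int.ediv_eq_zero_of_lt (by omega) (by omega)
  have hg0 : ∀ h : 0 < n, (⌊winv n u a v ⟨0, h⟩ - winv n u a v ⟨0, h⟩⌋ : ℤ) = 0 := by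
    intro h; simp
  calc (∑ j : Fin (n - 1),
      ⌊winv n u a v ⟨0, by omega⟩ - winv n u a v ⟨(j : ℕ) + 1, by have := j.isLt; omega⟩⌋)
      = ∑ i : Fin n, ⌊winv n u a v z - winv n u a v i⌋ := by
        exact sum_shift hn (fun i => ⌊winv n u a v z - winv n u a v i⌋) (fun h => by simp [hz])
    _ = ∑ i : Fin n, ((a (u i) - a (u z)) + (if u i < u z then (-1:ℤ) else 0)) := by
        refine Finset.sum_congr rfl (fun i _ => ?_)
        rw [hterm i, hdiv i]
    _ = (ℓ : ℤ) := by
        rw [Finset.sum_add_distrib, Finset.sum_sub_distrib,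
          Equiv.sum_comp u a, hsum, Finset.sum_const, Finset.card_univ, Fintype.card_fin,
          Finset.sum_ite, Finset.sum_const, Finset.sum_const]
        have hfil : (Finset.univ.filter (fun i : Fin n => u i < u z)) =
            Finset.image u.symm (Finset.univ.filter (fun x : Fin n => x < u z)) := by
          ext i
          simp only [Finset.mem_filter, Finset.mem_univ, true_and, Finset.mem_image]
          constructor
          · intro h; exact ⟨u i, h, u.symm_apply_apply i⟩
          · rintro ⟨x, hx, rfl⟩; simpa using hx
        rw [hfil, Finset.card_image_of_injective _ u.symm.injective]
        rw [show (Finset.univ.filter (fun x : Fin n => x < u z)) = Finset.Iio (u z) by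
          ext x; simp]
        rw [Fin.card_Iio]
        simp only [nsmul_eq_mul, mul_neg, mul_one, mul_zero, add_zero]
        rw [hlc, hceq]
        push_cast
        ring
end Shi
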